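/- The operator T_{α,β} is irreducible: if M is a closed subspace of H with T_{α,β} M ⊆ M and T_{α,β} M^⊥ ⊆ M^⊥, then M = {0} or M = H. -/

import Mathlib

open scoped ComplexConjugate

noncomputable section

/-- The Hilbert space `H = ℓ²(ℕ, ℂ)`. -/
abbrev H : Type := lp (fun _ : ℕ => ℂ) 2

/-- The standard orthonormal basis vectors of `ℓ²(ℕ, ℂ)`. -/
noncomputable def e (n : ℕ) : H := lp.single 2 n (1 : ℂ)

lemma e_coord (x : H) (n : ℕ) : @inner ℂ H _ (e n) x = x n := by
  rw [e, lp.inner_single_left]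
  simp [RCLike.inner_apply]

lemma inner_e (n m : ℕ) : @inner ℂ H _ (e n) (e m) = if n = m then (1:ℂ) else 0 := by
  rw [e, lp.inner_single_left]
  simp [RCLike.inner_apply, e, lp.single_apply, Pi.single_apply]

lemma dense_span_e : Dense (Submodule.span ℂ (Set.range e) : Set H) := by
  intro f
  have hf := lp.hasSum_single (E := fun _ : ℕ => ℂ) (by norm_num) f
  refine mem_closure_of_tendsto hf (Filter.Eventually.of_forall fun s => ?_)
  refine Submodule.sum_mem _ fun i _ => ?_
  have h1 : lp.single (E := fun _ : ℕ => ℂ) 2 i (f i) = f i • e i := by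
    rw [e, ← lp.single_smul]
    norm_num
  rw [h1]
  exact Submodule.smul_mem _ _ (Submodule.subset_span ⟨i, rfl⟩)

lemma eq_top_of_e_mem (N : Submodule ℂ H) (hcl : IsClosed (N : Set H))
    (h : ∀ n, e n ∈ N) : N = ⊤ := by
  rw [Submodule.eq_top_iff']
  intro x
  have hsub : (Submodule.span ℂ (Set.range e) : Set H) ⊆ (N : Set H) := by
    refine (Submodule.span_le.mpr ?_ : Submodule.span ℂ (Set.range e) ≤ N)
    rintro _ ⟨n, rfl⟩; exact h n
  have := closure_mono hsub (dense_span_e x)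
  rwa [hcl.closure_eq] at this

lemma gen_e (α β : ℂ) (hβ : β ≠ 0) (T : H →L[ℂ] H)
    (hT0 : T (e 0) = (α * conj β) • e 0 + β • e 1)
    (hTn : ∀ n : ℕ, 1 ≤ n → T (e n) = e (n + 1))
    (N : Submodule ℂ H) (hinv : ∀ x ∈ N, T x ∈ N) (h0 : e 0 ∈ N) :
    ∀ n, e n ∈ N := by
  have h1 : e 1 ∈ N := by
    have hT := hinv _ h0
    rw [hT0] at hT
    have : β • e 1 ∈ N := by
      have := N.sub_mem hT (N.smul_mem (α * conj β) h0)
      simpa using this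
    have := N.smul_mem β⁻¹ this
    rwa [smul_smul, inv_mul_cancel₀ hβ, one_smul] at this
  intro n
  induction n with
  | zero => exact h0
  | succ k ih =>
    cases k with
    | zero => exact h1
    | succ j =>
      have := hinv _ ih
      rwa [hTn (j+1) (by omega)] at this


open ContinuousLinearMap

set_option maxHeartbeats 1000000

/-- `T_{α,β}` is irreducible: it has no nontrivial reducing subspaces. -/
theorem T_irreducible (α β : ℂ) (hα : α ≠ 0) (hβ : β ≠ 0)
    (hnorm : ‖α‖ ^ 2 + ‖β‖ ^ 2 = 1)
    (T : H →L[ℂ] H)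
    (hT0 : T (e 0) = (α * conj β) • e 0 + β • e 1)
    (hTn : ∀ n : ℕ, 1 ≤ n → T (e n) = e (n + 1))
    (M : Submodule ℂ H) (hMcl : IsClosed (M : Set H))
    (hMinv : ∀ x ∈ M, T x ∈ M) (hMperp : ∀ x ∈ Mᗮ, T x ∈ Mᗮ) :
    M = ⊥ ∨ M = ⊤ := by
  haveI : CompleteSpace M := hMcl.completeSpace_coe
  by_cases hcase : ∀ x ∈ M, (@inner ℂ H _ (e 0) x) = 0
  · -- e 0 ∈ Mᗮ, so Mᗮ = ⊤, M = ⊥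
    left
    have h0 : e 0 ∈ Mᗮ := by
      rw [Submodule.mem_orthogonal]
      intro u hu
      rw [← inner_conj_symm, hcase u hu, map_zero]
    have hall : ∀ n, e n ∈ Mᗮ := gen_e α β hβ T hT0 hTn Mᗮ hMperp h0
    have htop : Mᗮ = ⊤ := eq_top_of_e_mem _ (Submodule.isClosed_orthogonal M) hall
    have := Submodule.le_orthogonal_orthogonal M
    rw [htop, Submodule.top_orthogonal_eq_bot] at this
    exact le_bot_iff.mp this
  · right
    push_neg at hcase
    obtain ⟨x, hxM, hx0⟩ := hcase
    -- adjoint invariance of M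
    have hadj : ∀ y ∈ M, adjoint T y ∈ M := by
      intro y hy
      have hmem : adjoint T y ∈ Mᗮᗮ := by
        rw [Submodule.mem_orthogonal]
        intro u hu
        rw [adjoint_inner_right]
        have := hMperp u hu
        rw [Submodule.mem_orthogonal] at this
        rw [← inner_conj_symm, this y hy, map_zero]
      rwa [Submodule.orthogonal_orthogonal] at hmem
    -- the key operator identity
    set K : ℂ := conj (α * conj β) * (α * conj β) + conj β * β with hK
    have hTT : ∀ n m : ℕ, (@inner ℂ H _ (T (e m)) (T (e n)))
        = if n = m then (if n = 0 then K else 1) else 0 := by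
      intro n m
      match n, m with
      | 0, 0 =>
        simp only [hT0, inner_add_left, inner_add_right, inner_smul_left, inner_smul_right,
          inner_e]
        norm_num
        rw [hK]
        simp only [map_mul, Complex.conj_conj]
        ring
      | 0, (j+1) =>
        rw [hT0, hTn (j+1) (by omega)]
        simp [inner_add_right, inner_smul_right, inner_e]
      | (k+1), 0 =>
        rw [hT0, hTn (k+1) (by omega)]
        simp [inner_add_left, inner_smul_left, inner_e]
      | (k+1), (j+1) =>
        rw [hTn (k+1) (by omega), hTn (j+1) (by omega), inner_e]
        simp [eq_comm]
    have hkey : (adjoint T).comp T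
        = ContinuousLinearMap.id ℂ H + (K - 1) • ((innerSL ℂ (e 0)).smulRight (e 0)) := by
      refine ContinuousLinearMap.ext_on dense_span_e ?_
      rintro _ ⟨n, rfl⟩
      refine lp.ext (funext fun m => ?_)
      have lhs : ((adjoint T).comp T) (e n) m
          = @inner ℂ H _ (T (e m)) (T (e n)) := by
        rw [← e_coord]
        simp only [ContinuousLinearMap.comp_apply, adjoint_inner_right]
      rw [lhs, hTT]
      have rhs : (ContinuousLinearMap.id ℂ H
          + (K - 1) • ((innerSL ℂ (e 0)).smulRight (e 0))) (e n) m
          = (e n) m + (K - 1) * (@inner ℂ H _ (e 0) (e n)) * (e 0) m := by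
        simp only [ContinuousLinearMap.add_apply, ContinuousLinearMap.id_apply,
          ContinuousLinearMap.smul_apply, ContinuousLinearMap.smulRight_apply, innerSL_apply_apply]
        rw [lp.coeFn_add, Pi.add_apply, lp.coeFn_smul, Pi.smul_apply, lp.coeFn_smul,
          Pi.smul_apply, smul_eq_mul, smul_eq_mul, mul_assoc]
      rw [rhs, ← e_coord (e n) m, ← e_coord (e 0) m, inner_e, inner_e, inner_e]
      split_ifs <;>
        first
        | (exfalso; omega)
        | (simp only [map_mul, Complex.conj_conj]; ring)
    -- K ≠ 1
    have hK1 : K - 1 ≠ 0 := by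
      have h1 : K = ((Complex.normSq α * Complex.normSq β + Complex.normSq β : ℝ) : ℂ) := by
        rw [hK, ← Complex.normSq_eq_conj_mul_self, ← Complex.normSq_eq_conj_mul_self,
          Complex.normSq_mul, Complex.normSq_conj]
        push_cast
        ring
      intro hc
      rw [sub_eq_zero, h1] at hc
      have hc' : (Complex.normSq α * Complex.normSq β + Complex.normSq β : ℝ) = 1 := by
        exact_mod_cast hc
      have ha : 0 < Complex.normSq α := Complex.normSq_pos.mpr hα
      have hb : 0 < Complex.normSq β := Complex.normSq_pos.mpr hβ
      have hsum : Complex.normSq α + Complex.normSq β = 1 := by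
        rw [← Complex.sq_norm, ← Complex.sq_norm]; exact hnorm
      nlinarith
    -- e 0 ∈ M
    have hBx : (adjoint T) (T x) ∈ M := hadj _ (hMinv _ hxM)
    have hBx' : (adjoint T) (T x) = x + ((K - 1) * (@inner ℂ H _ (e 0) x)) • e 0 := by
      have := congrArg (fun S : H →L[ℂ] H => S x) hkey
      simpa [ContinuousLinearMap.comp_apply, ContinuousLinearMap.add_apply,
        ContinuousLinearMap.smul_apply, ContinuousLinearMap.smulRight_apply, innerSL_apply_apply,
        smul_smul] using this
    have he0 : e 0 ∈ M := by
      have hmem : ((K - 1) * (@inner ℂ H _ (e 0) x)) • e 0 ∈ M := by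
        have := M.sub_mem hBx hxM
        rw [hBx'] at this
        simpa using this
      have hne : (K - 1) * (@inner ℂ H _ (e 0) x) ≠ 0 := mul_ne_zero hK1 hx0
      have := M.smul_mem ((K - 1) * (@inner ℂ H _ (e 0) x))⁻¹ hmem
      rwa [smul_smul, inv_mul_cancel₀ hne, one_smul] at this
    exact eq_top_of_e_mem M hMcl (gen_e α β hβ T hT0 hTn M hMinv he0)

end
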